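/- Suppose all poles of M(λ) are simple (Assumption 1). Then for every eigenvalue λ₀ of L, with α₀ := Res_{λ=λ₀} M(λ), one has V(φ(·,λ₀)) · α₀ = 0_m, i.e. (φ'(π,λ₀) + H φ(π,λ₀)) α₀ = 0_m. -/

import Mathlib

set_option autoImplicit false
set_option maxHeartbeats 1000000

open MeasureTheory Filter Topology Matrix Set intervalIntegral

noncomputable section

attribute [local instance] Matrix.linftyOpNormedAddCommGroup Matrix.linftyOpNormedSpace
  Matrix.linftyOpNormedRing Matrix.linftyOpNormedAlgebra

/-- Square complex matrices of size `m`. -/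
abbrev Mat (m : ℕ) := Matrix (Fin m) (Fin m) ℂ

instance matContinuousENorm (m : ℕ) : ContinuousENorm (Mat m) := SeminormedAddGroup.toContinuousENorm

instance matENormedAddCommMonoid (m : ℕ) : ENormedAddCommMonoid (Mat m) :=
  NormedAddCommGroup.toENormedAddCommMonoid

instance matPseudoMetrizableSpace (m : ℕ) : TopologicalSpace.PseudoMetrizableSpace (Mat m) :=
  @UniformSpace.pseudoMetrizableSpace _ PseudoMetricSpace.toUniformSpace _

/-- Principal square root of a complex number (branch with nonnegative real part). -/
def csqrt (z : ℂ) : ℂ := z ^ ((1 : ℂ)/2)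

/-- `Y` (with derivative `Y'`) is a matrix solution of `-Y'' + Q Y = λ Y`, in integrated form. -/
def IsMatSol {m : ℕ} (Q : ℝ → Mat m) (lam : ℂ) (Y Y' : ℝ → Mat m) : Prop :=
  (∀ x : ℝ, HasDerivAt Y (Y' x) x) ∧
  (∀ x : ℝ, Y' x = Y' 0 + ∫ t in (0:ℝ)..x, (Q t * Y t - lam • Y t))

/-- every singularity of `F` is (at most) a simple pole. -/
def AllPolesSimple {m : ℕ} (F : ℂ → Mat m) : Prop :=
  ∀ z₀ : ℂ, ∃ A : Mat m, Filter.Tendsto (fun z => (z - z₀) • F z) (𝓝[≠] z₀) (𝓝 A)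

/-- `A` is the residue of `F` at the simple pole `z₀`. -/
def IsResidueAt {m : ℕ} (F : ℂ → Mat m) (z₀ : ℂ) (A : Mat m) : Prop :=
  Filter.Tendsto (fun z => (z - z₀) • F z) (𝓝[≠] z₀) (𝓝 A)

/-- `Y` (with derivative `Y'`) is a column-vector solution of `-Y'' + Q Y = λ Y`. -/
def IsVecSol {m : ℕ} (Q : ℝ → Mat m) (lam : ℂ) (Y Y' : ℝ → (Fin m → ℂ)) : Prop :=
  (∀ x : ℝ, HasDerivAt Y (Y' x) x) ∧
  (∀ x : ℝ, Y' x = Y' 0 + ∫ t in (0:ℝ)..x, ((Q t).mulVec (Y t) - lam • Y t))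

/-- `Y` is a solution of the boundary value problem `L(Q,h,H)` at `λ` (possibly zero):
a solution of the equation satisfying `U(Y) = 0`, `V(Y) = 0`. -/
def IsBdSol {m : ℕ} (Q : ℝ → Mat m) (h H : Mat m) (lam : ℂ) (Y : ℝ → (Fin m → ℂ)) : Prop :=
  ∃ Y' : ℝ → (Fin m → ℂ), IsVecSol Q lam Y Y' ∧
    Y' 0 = h.mulVec (Y 0) ∧ Y' Real.pi + H.mulVec (Y Real.pi) = 0

lemma gronwall_L1 (b : ℝ) (hb : 0 < b) (k : ℝ → ℝ)
    (hk : IntervalIntegrable k volume 0 b)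
    (hk0 : ∀ t, 0 ≤ k t) :
    ∃ C : ℝ, 1 ≤ C ∧ ∀ (f : ℝ → ℝ) (a : ℝ), 0 ≤ a →
      ContinuousOn f (Icc 0 b) → (∀ x ∈ Icc 0 b, 0 ≤ f x) →
      (∀ x ∈ Icc 0 b, f x ≤ a + ∫ t in (0:ℝ)..x, k t * f t) →
      ∀ x ∈ Icc 0 b, f x ≤ C * a := by
  -- the primitive of k
  set Kp : ℝ → ℝ := fun x => ∫ t in (0:ℝ)..x, k t with hKp
  have hsub : ∀ u v : ℝ, 0 ≤ u → u ≤ v → v ≤ b → IntervalIntegrable k volume u v := by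
    intro u v hu huv hv
    refine hk.mono_set ?_
    rw [uIcc_of_le huv, uIcc_of_le hb.le]
    exact Icc_subset_Icc hu hv
  have hKpc : ContinuousOn Kp (Icc 0 b) := by
    have := intervalIntegral.continuousOn_primitive_interval' hk
      (left_mem_uIcc (a := (0:ℝ)) (b := b))
    rwa [uIcc_of_le hb.le] at this
  have hKuc := isCompact_Icc.uniformContinuousOn_of_continuous hKpc
  rw [Metric.uniformContinuousOn_iff] at hKuc
  obtain ⟨δ, hδ, hδa⟩ := hKuc (1/2) (by norm_num)
  obtain ⟨N, hN⟩ := exists_nat_gt (b / δ)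
  have hN0 : 0 < (N:ℝ) := lt_trans (div_pos hb hδ) hN
  have hstep : b / N < δ := by
    rw [div_lt_iff₀ hN0]
    rw [div_lt_iff₀ hδ] at hN
    nlinarith
  have hgap : ∀ u v : ℝ, 0 ≤ u → u ≤ v → v ≤ b → v - u < δ → (∫ t in u..v, k t) ≤ 1/2 := by
    intro u v hu huv hv hd
    have h1 : Kp u + ∫ t in u..v, k t = Kp v :=
      integral_add_adjacent_intervals (hsub 0 u le_rfl hu (by linarith)) (hsub u v hu huv hv)
    have h2 := hδa v ⟨by linarith, hv⟩ u ⟨hu, by linarith⟩ (by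
      rw [Real.dist_eq, abs_lt]; constructor <;> linarith)
    rw [Real.dist_eq, abs_lt] at h2
    linarith
  set Kb : ℝ := ∫ t in (0:ℝ)..b, k t with hKb
  have hKb0 : 0 ≤ Kb := intervalIntegral.integral_nonneg hb.le (fun u _ => hk0 u)
  set A : ℝ := 3 + 2 * Kb with hA
  have hA1 : (1:ℝ) ≤ A := by linarith
  refine ⟨A ^ N, one_le_pow₀ hA1, ?_⟩
  intro f a ha hfc hf0 hineq
  -- integrability of k * f
  have hkf : IntervalIntegrable (fun t => k t * f t) volume 0 b := by
    apply hk.mul_continuousOn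
    rwa [uIcc_of_le hb.le]
  have hkfsub : ∀ u v : ℝ, 0 ≤ u → u ≤ v → v ≤ b →
      IntervalIntegrable (fun t => k t * f t) volume u v := by
    intro u v hu huv hv
    refine hkf.mono_set ?_
    rw [uIcc_of_le huv, uIcc_of_le hb.le]
    exact Icc_subset_Icc hu hv
  -- main induction
  have main : ∀ i : ℕ, i ≤ N → ∀ x ∈ Icc (0:ℝ) (i * (b/N)), f x ≤ A ^ i * a := by
    intro i
    induction i with
    | zero =>
      intro _ x hx
      simp only [Nat.cast_zero, zero_mul] at hx
      have hx0 : x = 0 := le_antisymm hx.2 hx.1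
      have := hineq 0 ⟨le_rfl, hb.le⟩
      simp only [intervalIntegral.integral_same, add_zero] at this
      simpa [hx0] using this
    | succ i ih =>
      intro hiN x hx
      have hiN' : i ≤ N := le_of_lt (Nat.lt_of_succ_le hiN)
      have ihh := ih hiN'
      set u : ℝ := i * (b/N) with hu
      set v : ℝ := (i+1) * (b/N) with hv
      have hbN : 0 < b / N := div_pos hb hN0
      have hu0 : 0 ≤ u := mul_nonneg (Nat.cast_nonneg i) hbN.le
      have huv : u ≤ v := by
        apply mul_le_mul_of_nonneg_right _ hbN.le
        linarith
      have hvb : v ≤ b := by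
        have : ((i:ℝ)+1) ≤ N := by exact_mod_cast hiN
        calc v ≤ N * (b/N) := mul_le_mul_of_nonneg_right this hbN.le
        _ = b := by field_simp
      have hpow : A ^ i * a ≤ A ^ (i+1) * a := by
        apply mul_le_mul_of_nonneg_right _ ha
        exact pow_le_pow_right₀ hA1 (Nat.le_succ i)
      rcases le_or_gt x u with hxu | hxu
      · exact le_trans (ihh x ⟨hx.1, hxu⟩) hpow
      · -- x ∈ Icc u v
        have hxJ : x ∈ Icc u v := ⟨hxu.le, by
          have := hx.2
          push_cast at this
          linarith⟩
        have hJsub : Icc u v ⊆ Icc 0 b := Icc_subset_Icc hu0 hvb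
        obtain ⟨w, hwJ, hwmax⟩ := isCompact_Icc.exists_isMaxOn ⟨u, left_mem_Icc.2 huv⟩
          (hfc.mono hJsub)
        have hwb : w ∈ Icc (0:ℝ) b := hJsub hwJ
        have hfw0 : 0 ≤ f w := hf0 w hwb
        -- split the integral
        have hsplit : (∫ t in (0:ℝ)..w, k t * f t) =
            (∫ t in (0:ℝ)..u, k t * f t) + ∫ t in u..w, k t * f t :=
          (integral_add_adjacent_intervals (hkfsub 0 u le_rfl hu0 (by linarith))
            (hkfsub u w hu0 hwJ.1 hwb.2)).symm
        -- bound first piece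
        have hb1 : (∫ t in (0:ℝ)..u, k t * f t) ≤ Kb * (A ^ i * a) := by
          have h1 : (∫ t in (0:ℝ)..u, k t * f t) ≤ ∫ t in (0:ℝ)..u, k t * (A ^ i * a) := by
            apply intervalIntegral.integral_mono_on hu0 (hkfsub 0 u le_rfl hu0 (by linarith))
              ((hsub 0 u le_rfl hu0 (by linarith)).mul_const _)
            intro t ht
            have : t ∈ Icc (0:ℝ) (i * (b/N)) := ht
            exact mul_le_mul_of_nonneg_left (ihh t this) (hk0 t)
          have h2 : (∫ t in (0:ℝ)..u, k t * (A ^ i * a)) = (∫ t in (0:ℝ)..u, k t) * (A ^ i * a) := by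
            rw [intervalIntegral.integral_mul_const]
          have h3 : (∫ t in (0:ℝ)..u, k t) ≤ Kb := by
            have h4 : (∫ t in (0:ℝ)..u, k t) + ∫ t in u..b, k t = Kb :=
              integral_add_adjacent_intervals (hsub 0 u le_rfl hu0 (by linarith))
                (hsub u b hu0 (le_trans huv hvb) le_rfl)
            have h5 : 0 ≤ ∫ t in u..b, k t :=
              intervalIntegral.integral_nonneg (by linarith) (fun t _ => hk0 t)
            linarith
          calc (∫ t in (0:ℝ)..u, k t * f t) ≤ (∫ t in (0:ℝ)..u, k t) * (A ^ i * a) := by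
                rw [← h2]; exact h1
          _ ≤ Kb * (A ^ i * a) := mul_le_mul_of_nonneg_right h3 (mul_nonneg (by positivity) ha)
        -- bound second piece
        have hb2 : (∫ t in u..w, k t * f t) ≤ (1/2) * f w := by
          have h1 : (∫ t in u..w, k t * f t) ≤ ∫ t in u..w, k t * f w := by
            apply intervalIntegral.integral_mono_on hwJ.1 (hkfsub u w hu0 hwJ.1 hwb.2)
              ((hsub u w hu0 hwJ.1 hwb.2).mul_const _)
            intro t ht
            exact mul_le_mul_of_nonneg_left
              (hwmax (⟨ht.1, le_trans ht.2 hwJ.2⟩ : t ∈ Icc u v)) (hk0 t)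
          have h2 : (∫ t in u..w, k t * f w) = (∫ t in u..w, k t) * f w := by
            rw [intervalIntegral.integral_mul_const]
          have h3 : (∫ t in u..w, k t) ≤ 1/2 := by
            apply hgap u w hu0 hwJ.1 hwb.2
            have : w - u ≤ v - u := by linarith [hwJ.2]
            have hvu : v - u = b / N := by rw [hv, hu]; ring
            linarith [hstep]
          calc (∫ t in u..w, k t * f t) ≤ (∫ t in u..w, k t) * f w := le_trans h1 (le_of_eq h2)
          _ ≤ (1/2) * f w := mul_le_mul_of_nonneg_right h3 hfw0
        -- combine
        have hw := hineq w hwb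
        rw [hsplit] at hw
        have hfwb : f w ≤ 2 * a + 2 * (Kb * (A ^ i * a)) := by linarith
        have hfin : f w ≤ A ^ (i+1) * a := by
          have hAi : (1:ℝ) ≤ A ^ i := one_le_pow₀ hA1
          have : A ^ (i+1) = A * A ^ i := by ring
          rw [this, hA]
          nlinarith [mul_nonneg (sub_nonneg.2 hAi) ha, mul_nonneg hKb0 (mul_nonneg (sub_nonneg.2 hAi) ha)]
        exact le_trans (hwmax hxJ) hfin
  intro x hx
  have hNb : (N:ℝ) * (b/N) = b := by field_simp
  exact main N le_rfl x (by rw [hNb]; exact hx)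


lemma norm_stdBasisMatrix_le {m : ℕ} (i j : Fin m) (c : ℂ) :
    ‖Matrix.single i j c‖ ≤ ‖c‖ := by
  rw [← coe_nnnorm, ← coe_nnnorm, NNReal.coe_le_coe, Matrix.linfty_opNNNorm_def]
  apply Finset.sup_le
  intro i' _
  calc ∑ j' : Fin m, ‖Matrix.single i j c i' j'‖₊
      ≤ ∑ j' : Fin m, (if j = j' then ‖c‖₊ else 0) := by
        apply Finset.sum_le_sum
        intro j' _
        simp only [Matrix.single, of_apply]
        split_ifs with h1 h2 h2 <;> simp_all
  _ = ‖c‖₊ := by simp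

lemma aesm_matrix {m : ℕ} (F : ℝ → Mat m) (μ : Measure ℝ)
    (h : ∀ j k, AEStronglyMeasurable (fun t => F t j k) μ) :
    AEStronglyMeasurable F μ := by
  have heq : ∀ t, F t = ∑ j : Fin m, ∑ k : Fin m, (F t j k) • Matrix.single j k (1:ℂ) := by
    intro t
    conv_lhs => rw [matrix_eq_sum_single (F t)]
    refine Finset.sum_congr rfl fun j _ => Finset.sum_congr rfl fun k _ => ?_
    rw [smul_single, smul_eq_mul, mul_one]
  have : AEStronglyMeasurable
      (fun t => ∑ j : Fin m, ∑ k : Fin m, (F t j k) • Matrix.single j k (1:ℂ)) μ := by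
    apply Finset.aestronglyMeasurable_fun_sum
    intro j _
    apply Finset.aestronglyMeasurable_fun_sum
    intro k _
    exact (h j k).smul_const _
  exact this.congr (Filter.Eventually.of_forall fun t => (heq t).symm)

lemma norm_matrix_le_sum {m : ℕ} (A : Mat m) : ‖A‖ ≤ ∑ j : Fin m, ∑ k : Fin m, ‖A j k‖ := by
  conv_lhs => rw [matrix_eq_sum_single A]
  refine le_trans (norm_sum_le _ _) (Finset.sum_le_sum fun j _ => ?_)
  refine le_trans (norm_sum_le _ _) (Finset.sum_le_sum fun k _ => ?_)
  exact norm_stdBasisMatrix_le j k _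

example (m : ℕ) : CompleteSpace (Mat m) := by infer_instance

lemma q_intble {m : ℕ} (Q : ℝ → Mat m)
    (hQL2 : ∀ j k : Fin m, MemLp (fun x => Q x j k) 2 (volume.restrict (Set.Ioo 0 Real.pi))) :
    IntervalIntegrable (fun t => ‖Q t‖) volume 0 Real.pi ∧
      AEStronglyMeasurable Q (volume.restrict (Set.Ioc 0 Real.pi)) := by
  have hae : volume.restrict (Set.Ioo (0:ℝ) Real.pi) = volume.restrict (Set.Ioc 0 Real.pi) :=
    Measure.restrict_congr_set Ioo_ae_eq_Ioc
  have hfin : IsFiniteMeasure (volume.restrict (Set.Ioc (0:ℝ) Real.pi)) := by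
    constructor
    rw [Measure.restrict_apply_univ]
    exact measure_Ioc_lt_top
  have hent : ∀ j k : Fin m, Integrable (fun x => Q x j k)
      (volume.restrict (Set.Ioc 0 Real.pi)) := by
    intro j k
    have := (hQL2 j k).mono_exponent (p := 1) (by norm_num)
    rw [hae] at this
    exact memLp_one_iff_integrable.1 this
  have hQm : AEStronglyMeasurable Q (volume.restrict (Set.Ioc 0 Real.pi)) := by
    apply aesm_matrix
    intro j k
    exact (hent j k).aestronglyMeasurable
  refine ⟨?_, hQm⟩
  rw [intervalIntegrable_iff_integrableOn_Ioc_of_le Real.pi_pos.le]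
  have hQint : Integrable Q (volume.restrict (Set.Ioc 0 Real.pi)) := by
    apply Integrable.mono' (g := fun t => ∑ j : Fin m, ∑ k : Fin m, ‖Q t j k‖)
      (by exact integrable_finset_sum _ fun j _ => integrable_finset_sum _ fun k _ => (hent j k).norm)
      hQm
    exact Filter.Eventually.of_forall fun t => norm_matrix_le_sum (Q t)
  exact hQint.norm

lemma Qmul_intble {m : ℕ} (Q : ℝ → Mat m)
    (hq : IntervalIntegrable (fun t => ‖Q t‖) volume 0 Real.pi)
    (hQm : AEStronglyMeasurable Q (volume.restrict (Set.Ioc 0 Real.pi)))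
    (g : ℝ → Mat m) (hg : ContinuousOn g (Set.Icc 0 Real.pi)) :
    IntervalIntegrable (fun t => Q t * g t) volume 0 Real.pi := by
  obtain ⟨B, hB⟩ := isCompact_Icc.exists_bound_of_continuousOn hg
  rw [intervalIntegrable_iff_integrableOn_Ioc_of_le Real.pi_pos.le] at hq ⊢
  apply Integrable.mono' (g := fun t => ‖Q t‖ * B) (hq.mul_const B)
  · exact hQm.mul ((hg.mono Ioc_subset_Icc_self).aestronglyMeasurable measurableSet_Ioc)
  · filter_upwards [ae_restrict_mem measurableSet_Ioc] with t ht
    calc ‖Q t * g t‖ ≤ ‖Q t‖ * ‖g t‖ := norm_mul_le _ _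
    _ ≤ ‖Q t‖ * B := mul_le_mul_of_nonneg_left (hB t (Ioc_subset_Icc_self ht)) (norm_nonneg _)


lemma sol_contOn {m : ℕ} (Q : ℝ → Mat m)
    (hq : IntervalIntegrable (fun t => ‖Q t‖) volume 0 Real.pi)
    (hQm : AEStronglyMeasurable Q (volume.restrict (Set.Ioc 0 Real.pi)))
    (z : ℂ) (Y Y' : ℝ → Mat m) (hsol : IsMatSol Q z Y Y') :
    Continuous Y ∧ ContinuousOn Y' (Set.Icc 0 Real.pi) ∧
      IntervalIntegrable (fun t => Q t * Y t - z • Y t) volume 0 Real.pi := by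
  have hYc : Continuous Y := by
    rw [continuous_iff_continuousAt]
    exact fun x => (hsol.1 x).continuousAt
  have hint : IntervalIntegrable (fun t => Q t * Y t - z • Y t) volume 0 Real.pi :=
    (Qmul_intble Q hq hQm Y hYc.continuousOn).sub
      ((hYc.const_smul z).continuousOn.intervalIntegrable)
  refine ⟨hYc, ?_, hint⟩
  have h1 := intervalIntegral.continuousOn_primitive_interval' hint
    (left_mem_uIcc (a := (0:ℝ)) (b := Real.pi))
  rw [uIcc_of_le Real.pi_pos.le] at h1
  exact (continuousOn_const.add h1).congr fun x _ => hsol.2 x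

lemma sol_dist {m : ℕ} (Q : ℝ → Mat m)
    (hQL2 : ∀ j k : Fin m, MemLp (fun x => Q x j k) 2 (volume.restrict (Set.Ioo 0 Real.pi)))
    (c : ℝ) (w : ℂ) (P P' : ℝ → Mat m) (hPsol : IsMatSol Q w P P') (hwc : ‖w‖ ≤ c) :
    ∃ C : ℝ, 0 ≤ C ∧ ∀ (z : ℂ) (Y Y' : ℝ → Mat m), ‖z‖ ≤ c →
      IsMatSol Q z Y Y' → Y 0 = P 0 → Y' 0 = P' 0 →
      ‖Y Real.pi - P Real.pi‖ + ‖Y' Real.pi - P' Real.pi‖ ≤ C * ‖z - w‖ := by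
  obtain ⟨hq, hQm⟩ := q_intble Q hQL2
  have hb : (0:ℝ) < Real.pi := Real.pi_pos
  have hc0 : 0 ≤ c := (norm_nonneg w).trans hwc
  set k : ℝ → ℝ := fun t => 1 + c + ‖Q t‖ with hkdef
  have hk0 : ∀ t, 0 ≤ k t := by
    intro t
    have := norm_nonneg (Q t)
    simp only [hkdef]
    linarith
  have hkint : IntervalIntegrable k volume 0 Real.pi :=
    (_root_.intervalIntegrable_const (c := 1 + c)).add hq
  obtain ⟨C₀, hC₀1, hC₀⟩ := gronwall_L1 Real.pi hb k hkint hk0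
  obtain ⟨hPc, hP'c, hIPπ⟩ := sol_contOn Q hq hQm w P P' hPsol
  set CP : ℝ := ∫ t in (0:ℝ)..Real.pi, ‖P t‖ with hCPdef
  have hCP0 : 0 ≤ CP := intervalIntegral.integral_nonneg hb.le fun t _ => norm_nonneg _
  refine ⟨C₀ * CP, mul_nonneg (by linarith) hCP0, ?_⟩
  intro z Y Y' hzc hYsol hY0 hY'0
  obtain ⟨hYc, hY'c, hIYπ⟩ := sol_contOn Q hq hQm z Y Y' hYsol
  set D : ℝ → Mat m := fun x => Y x - P x with hDdef
  set E : ℝ → Mat m := fun x => Y' x - P' x with hEdef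
  set G : ℝ → Mat m := fun t => Q t * D t - z • D t + (w - z) • P t with hGdef
  have hDc : Continuous D := hYc.sub hPc
  have hEc : ContinuousOn E (Set.Icc 0 Real.pi) := hY'c.sub hP'c
  have hD0 : D 0 = 0 := by simp [hDdef, hY0]
  have hE0 : E 0 = 0 := by simp [hEdef, hY'0]
  have hGπ : IntervalIntegrable G volume 0 Real.pi :=
    ((Qmul_intble Q hq hQm D hDc.continuousOn).sub
      ((hDc.const_smul z).continuousOn.intervalIntegrable)).add
      ((hPc.const_smul (w - z)).continuousOn.intervalIntegrable)
  -- mono to subintervals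
  have hmono : ∀ x : ℝ, x ∈ Set.Icc (0:ℝ) Real.pi → ∀ {F : ℝ → Mat m},
      IntervalIntegrable F volume 0 Real.pi → IntervalIntegrable F volume 0 x := by
    intro x hx F hF
    refine hF.mono_set ?_
    rw [uIcc_of_le hx.1, uIcc_of_le hb.le]
    exact Set.Icc_subset_Icc le_rfl hx.2
  have hmonoR : ∀ x : ℝ, x ∈ Set.Icc (0:ℝ) Real.pi → ∀ {F : ℝ → ℝ},
      IntervalIntegrable F volume 0 Real.pi → IntervalIntegrable F volume 0 x := by
    intro x hx F hF
    refine hF.mono_set ?_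
    rw [uIcc_of_le hx.1, uIcc_of_le hb.le]
    exact Set.Icc_subset_Icc le_rfl hx.2
  -- integral identities
  have hDx : ∀ x ∈ Set.Icc (0:ℝ) Real.pi, D x = ∫ t in (0:ℝ)..x, E t := by
    intro x hx
    have hEi : IntervalIntegrable E volume 0 x := by
      apply ((hEc.mono (Set.Icc_subset_Icc le_rfl hx.2)).mono ?_).intervalIntegrable
      rw [uIcc_of_le hx.1]
    have := intervalIntegral.integral_eq_sub_of_hasDerivAt
      (f := D) (f' := E) (fun t _ => (hYsol.1 t).sub (hPsol.1 t)) hEi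
    rw [this, hD0, sub_zero]
  have hEx : ∀ x ∈ Set.Icc (0:ℝ) Real.pi, E x = ∫ t in (0:ℝ)..x, G t := by
    intro x hx
    have h1 := hYsol.2 x
    have h2 := hPsol.2 x
    have h3 : E x = (∫ t in (0:ℝ)..x, (Q t * Y t - z • Y t)) -
        ∫ t in (0:ℝ)..x, (Q t * P t - w • P t) := by
      simp only [hEdef, h1, h2, hY'0]
      abel
    rw [h3, ← intervalIntegral.integral_sub (hmono x hx hIYπ) (hmono x hx hIPπ)]
    apply intervalIntegral.integral_congr
    intro t _
    simp only [hGdef, hDdef, mul_sub, smul_sub, sub_smul]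
    abel
  -- the Gronwall inequality
  set f : ℝ → ℝ := fun x => ‖D x‖ + ‖E x‖ with hfdef
  set a : ℝ := ‖z - w‖ * CP with hadef
  have hfc : ContinuousOn f (Set.Icc 0 Real.pi) := (hDc.norm.continuousOn).add hEc.norm
  have hf0 : ∀ x ∈ Set.Icc (0:ℝ) Real.pi, 0 ≤ f x :=
    fun x _ => add_nonneg (norm_nonneg _) (norm_nonneg _)
  have hkf : IntervalIntegrable (fun t => k t * f t) volume 0 Real.pi := by
    apply hkint.mul_continuousOn
    rwa [uIcc_of_le hb.le]
  have hineq : ∀ x ∈ Set.Icc (0:ℝ) Real.pi, f x ≤ a + ∫ t in (0:ℝ)..x, k t * f t := by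
    intro x hx
    have hEn : IntervalIntegrable (fun t => ‖E t‖) volume 0 x := by
      apply (((hEc.mono (Set.Icc_subset_Icc le_rfl hx.2)).norm).mono ?_).intervalIntegrable
      rw [uIcc_of_le hx.1]
    have hGn : IntervalIntegrable (fun t => ‖G t‖) volume 0 x := (hmono x hx hGπ).norm
    have hPn : IntervalIntegrable (fun t => ‖P t‖) volume 0 Real.pi :=
      hPc.norm.continuousOn.intervalIntegrable
    have s1 : ‖D x‖ ≤ ∫ t in (0:ℝ)..x, ‖E t‖ := by
      rw [hDx x hx]
      exact intervalIntegral.norm_integral_le_integral_norm hx.1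
    have s2 : ‖E x‖ ≤ ∫ t in (0:ℝ)..x, ‖G t‖ := by
      rw [hEx x hx]
      exact intervalIntegral.norm_integral_le_integral_norm hx.1
    have s3 : (∫ t in (0:ℝ)..x, ‖E t‖) + ∫ t in (0:ℝ)..x, ‖G t‖ =
        ∫ t in (0:ℝ)..x, (‖E t‖ + ‖G t‖) := (intervalIntegral.integral_add hEn hGn).symm
    have s4 : (∫ t in (0:ℝ)..x, (‖E t‖ + ‖G t‖)) ≤
        ∫ t in (0:ℝ)..x, (k t * f t + ‖z - w‖ * ‖P t‖) := by
      apply intervalIntegral.integral_mono_on hx.1 (hEn.add hGn)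
        ((hmonoR x hx hkf).add ((hmonoR x hx hPn).const_mul _))
      intro t ht
      have hGt : ‖G t‖ ≤ (‖Q t‖ + ‖z‖) * ‖D t‖ + ‖z - w‖ * ‖P t‖ := by
        calc ‖G t‖ ≤ ‖Q t * D t - z • D t‖ + ‖(w - z) • P t‖ := norm_add_le _ _
        _ ≤ ‖Q t * D t‖ + ‖z • D t‖ + ‖(w - z) • P t‖ := by
            gcongr; exact norm_sub_le _ _
        _ ≤ ‖Q t‖ * ‖D t‖ + ‖z‖ * ‖D t‖ + ‖z - w‖ * ‖P t‖ := by
            rw [norm_smul, norm_smul, norm_sub_rev w z]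
            gcongr
            exact norm_mul_le _ _
        _ = (‖Q t‖ + ‖z‖) * ‖D t‖ + ‖z - w‖ * ‖P t‖ := by ring
      have h1 : k t * f t = (1 + c + ‖Q t‖) * (‖D t‖ + ‖E t‖) := rfl
      have h2 : 0 ≤ ‖D t‖ := norm_nonneg _
      have h3 : 0 ≤ ‖E t‖ := norm_nonneg _
      have h4 : 0 ≤ ‖Q t‖ := norm_nonneg _
      have h5 : ‖z‖ ≤ c := hzc
      nlinarith [mul_nonneg (sub_nonneg.2 h5) h2, mul_nonneg hc0 h3, mul_nonneg h4 h3]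
    have s5 : (∫ t in (0:ℝ)..x, (k t * f t + ‖z - w‖ * ‖P t‖)) =
        (∫ t in (0:ℝ)..x, k t * f t) + ‖z - w‖ * ∫ t in (0:ℝ)..x, ‖P t‖ := by
      rw [intervalIntegral.integral_add (hmonoR x hx hkf) ((hmonoR x hx hPn).const_mul _),
        intervalIntegral.integral_const_mul]
    have s6 : (∫ t in (0:ℝ)..x, ‖P t‖) ≤ CP := by
      have h4 : (∫ t in (0:ℝ)..x, ‖P t‖) + ∫ t in x..Real.pi, ‖P t‖ = CP :=
        intervalIntegral.integral_add_adjacent_intervals (hmonoR x hx hPn)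
          (hPn.mono_set (by rw [uIcc_of_le hx.2, uIcc_of_le hb.le]
                            exact Set.Icc_subset_Icc hx.1 le_rfl))
      have h5 : 0 ≤ ∫ t in x..Real.pi, ‖P t‖ :=
        intervalIntegral.integral_nonneg hx.2 fun t _ => norm_nonneg _
      linarith
    have s7 : ‖z - w‖ * (∫ t in (0:ℝ)..x, ‖P t‖) ≤ a :=
      mul_le_mul_of_nonneg_left s6 (norm_nonneg _)
    calc f x = ‖D x‖ + ‖E x‖ := rfl
    _ ≤ (∫ t in (0:ℝ)..x, ‖E t‖) + ∫ t in (0:ℝ)..x, ‖G t‖ := add_le_add s1 s2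
    _ = ∫ t in (0:ℝ)..x, (‖E t‖ + ‖G t‖) := s3
    _ ≤ ∫ t in (0:ℝ)..x, (k t * f t + ‖z - w‖ * ‖P t‖) := s4
    _ = (∫ t in (0:ℝ)..x, k t * f t) + ‖z - w‖ * ∫ t in (0:ℝ)..x, ‖P t‖ := s5
    _ ≤ a + ∫ t in (0:ℝ)..x, k t * f t := by linarith
  have ha0 : 0 ≤ a := mul_nonneg (norm_nonneg _) hCP0
  have := hC₀ f a ha0 hfc hf0 hineq Real.pi ⟨hb.le, le_rfl⟩
  calc ‖Y Real.pi - P Real.pi‖ + ‖Y' Real.pi - P' Real.pi‖ = f Real.pi := rfl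
  _ ≤ C₀ * a := this
  _ = C₀ * CP * ‖z - w‖ := by rw [hadef]; ring


/-- eq. (17): under Assumption 1, for every eigenvalue `λ₀` of `L` with
residue `α₀ = Res_{λ=λ₀} M(λ)` one has `V(φ(·,λ₀)) α₀ = 0`. -/
theorem statement11
    (m : ℕ) (hm : 1 ≤ m)
    (Q : ℝ → Mat m)
    (hQL2 : ∀ j k : Fin m, MemLp (fun x => Q x j k) 2 (volume.restrict (Set.Ioo 0 Real.pi)))
    (h H : Mat m)
    (φ φ' S S' : ℂ → ℝ → Mat m)
    (hφsol : ∀ z : ℂ, IsMatSol Q z (φ z) (φ' z))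
    (hφ0 : ∀ z : ℂ, φ z 0 = 1) (hφ'0 : ∀ z : ℂ, φ' z 0 = h)
    (hSsol : ∀ z : ℂ, IsMatSol Q z (S z) (S' z))
    (hS0 : ∀ z : ℂ, S z 0 = 0) (hS'0 : ∀ z : ℂ, S' z 0 = 1)
    -- the Weyl matrix M(λ) = −(V(φ))⁻¹ V(S)
    (M : ℂ → Mat m)
    (hM : ∀ z : ℂ, M z =
      -((φ' z Real.pi + H * φ z Real.pi)⁻¹ * (S' z Real.pi + H * S z Real.pi)))
    -- Assumption 1
    (hA1 : AllPolesSimple M)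
    (lam₀ : ℂ)
    (heig₀ : ∃ Y : ℝ → (Fin m → ℂ), IsBdSol Q h H lam₀ Y ∧ Y ≠ 0)
    (α₀ : Mat m)
    (hα₀ : IsResidueAt M lam₀ α₀) :
    (φ' lam₀ Real.pi + H * φ lam₀ Real.pi) * α₀ = 0 := by
  classical
  set b : ℝ := Real.pi
  set c : ℝ := ‖lam₀‖ + 1 with hcdef
  obtain ⟨Cφ, hCφ0, hCφ⟩ := sol_dist Q hQL2 c lam₀ (φ lam₀) (φ' lam₀) (hφsol lam₀)
    (by simp [hcdef])
  obtain ⟨CS, hCS0, hCS⟩ := sol_dist Q hQL2 c lam₀ (S lam₀) (S' lam₀) (hSsol lam₀)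
    (by simp [hcdef])
  set A : ℂ → Mat m := fun z => φ' z Real.pi + H * φ z Real.pi with hAdef
  set B : ℂ → Mat m := fun z => S' z Real.pi + H * S z Real.pi with hBdef
  -- eventually, z is close to lam₀
  have hev : ∀ᶠ z in 𝓝[≠] lam₀, ‖z - lam₀‖ ≤ 1 := by
    have h1 : ∀ᶠ z in 𝓝 lam₀, ‖z - lam₀‖ ≤ 1 := by
      have := Metric.ball_mem_nhds lam₀ one_pos
      filter_upwards [this] with z hz
      rw [Metric.mem_ball, Complex.dist_eq] at hz
      exact hz.le
    exact nhdsWithin_le_nhds h1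
  have hzc : ∀ z : ℂ, ‖z - lam₀‖ ≤ 1 → ‖z‖ ≤ c := by
    intro z hz
    calc ‖z‖ = ‖z - lam₀ + lam₀‖ := by ring_nf
    _ ≤ ‖z - lam₀‖ + ‖lam₀‖ := norm_add_le _ _
    _ ≤ c := by rw [hcdef]; linarith
  -- the four convergence statements
  have hφev : ∀ᶠ z in 𝓝[≠] lam₀,
      ‖φ z Real.pi - φ lam₀ Real.pi‖ + ‖φ' z Real.pi - φ' lam₀ Real.pi‖ ≤ Cφ * ‖z - lam₀‖ := by
    filter_upwards [hev] with z hz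
    exact hCφ z (φ z) (φ' z) (hzc z hz) (hφsol z) (by rw [hφ0, hφ0]) (by rw [hφ'0, hφ'0])
  have hSev : ∀ᶠ z in 𝓝[≠] lam₀,
      ‖S z Real.pi - S lam₀ Real.pi‖ + ‖S' z Real.pi - S' lam₀ Real.pi‖ ≤ CS * ‖z - lam₀‖ := by
    filter_upwards [hev] with z hz
    exact hCS z (S z) (S' z) (hzc z hz) (hSsol z) (by rw [hS0, hS0]) (by rw [hS'0, hS'0])
  have hlin : ∀ C : ℝ, Tendsto (fun z : ℂ => C * ‖z - lam₀‖) (𝓝[≠] lam₀) (𝓝 0) := by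
    intro C
    have h1 : Continuous fun z : ℂ => C * ‖z - lam₀‖ :=
      continuous_const.mul ((continuous_id.sub continuous_const).norm)
    have h2 := h1.tendsto lam₀
    simp only [sub_self, norm_zero, mul_zero] at h2
    exact h2.mono_left nhdsWithin_le_nhds
  have tendsto_of_bound : ∀ (F : ℂ → Mat m) (L : Mat m) (C : ℝ),
      (∀ᶠ z in 𝓝[≠] lam₀, ‖F z - L‖ ≤ C * ‖z - lam₀‖) →
      Tendsto F (𝓝[≠] lam₀) (𝓝 L) := by
    intro F L C hF
    refine tendsto_iff_norm_sub_tendsto_zero.2 ?_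
    exact squeeze_zero_norm' (by filter_upwards [hF] with z hz using by simpa using hz) (hlin C)
  have hφt : Tendsto (fun z => φ z Real.pi) (𝓝[≠] lam₀) (𝓝 (φ lam₀ Real.pi)) := by
    apply tendsto_of_bound _ _ Cφ
    filter_upwards [hφev] with z hz
    have := norm_nonneg (φ' z Real.pi - φ' lam₀ Real.pi)
    linarith
  have hφ't : Tendsto (fun z => φ' z Real.pi) (𝓝[≠] lam₀) (𝓝 (φ' lam₀ Real.pi)) := by
    apply tendsto_of_bound _ _ Cφ
    filter_upwards [hφev] with z hz
    have := norm_nonneg (φ z Real.pi - φ lam₀ Real.pi)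
    linarith
  have hSt : Tendsto (fun z => S z Real.pi) (𝓝[≠] lam₀) (𝓝 (S lam₀ Real.pi)) := by
    apply tendsto_of_bound _ _ CS
    filter_upwards [hSev] with z hz
    have := norm_nonneg (S' z Real.pi - S' lam₀ Real.pi)
    linarith
  have hS't : Tendsto (fun z => S' z Real.pi) (𝓝[≠] lam₀) (𝓝 (S' lam₀ Real.pi)) := by
    apply tendsto_of_bound _ _ CS
    filter_upwards [hSev] with z hz
    have := norm_nonneg (S z Real.pi - S lam₀ Real.pi)
    linarith
  have hAt : Tendsto A (𝓝[≠] lam₀) (𝓝 (A lam₀)) := hφ't.add (hφt.const_mul H)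
  have hBt : Tendsto B (𝓝[≠] lam₀) (𝓝 (B lam₀)) := hS't.add (hSt.const_mul H)
  -- the function g z = A z * ((z - lam₀) • M z)
  set g : ℂ → Mat m := fun z => A z * ((z - lam₀) • M z) with hgdef
  have hg1 : Tendsto g (𝓝[≠] lam₀) (𝓝 (A lam₀ * α₀)) := hAt.mul hα₀
  have hg2 : Tendsto g (𝓝[≠] lam₀) (𝓝 0) := by
    have hbound : ∀ z : ℂ, ‖g z‖ ≤ ‖(z - lam₀) • B z‖ := by
      intro z
      by_cases hu : IsUnit (A z).det
      · have h1 : A z * M z = -(B z) := by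
          rw [hM z]
          calc A z * -((A z)⁻¹ * B z) = -(A z * (A z)⁻¹ * B z) := by
                rw [mul_neg, mul_assoc]
          _ = -(B z) := by rw [Matrix.mul_nonsing_inv _ hu, one_mul]
        have h2 : g z = -((z - lam₀) • B z) := by
          rw [hgdef]
          simp only [mul_smul_comm, h1, smul_neg]
        rw [h2, norm_neg]
      · have h1 : M z = 0 := by
          rw [hM z, Matrix.nonsing_inv_apply_not_isUnit _ hu, zero_mul, neg_zero]
        simp [hgdef, h1]
    have hsB : Tendsto (fun z : ℂ => (z - lam₀) • B z) (𝓝[≠] lam₀) (𝓝 0) := by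
      have h1 : Tendsto (fun z : ℂ => z - lam₀) (𝓝[≠] lam₀) (𝓝 0) := by
        have h0 := (continuous_id.sub (continuous_const (y := lam₀))).tendsto lam₀
        simp only [Pi.sub_apply, id_eq, sub_self] at h0
        exact Tendsto.mono_left h0 nhdsWithin_le_nhds
      have := h1.smul hBt
      simpa using this
    have hn : Tendsto (fun z : ℂ => ‖(z - lam₀) • B z‖) (𝓝[≠] lam₀) (𝓝 0) := by
      simpa using hsB.norm
    exact squeeze_zero_norm' (Filter.Eventually.of_forall hbound) hn
  have : A lam₀ * α₀ = 0 := tendsto_nhds_unique hg1 hg2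
  exact this
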